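/- For every real L with 0 < L < 1 and every n ∈ ℕ there exists a nonzero polynomial P(x) = Σ_{j=0}^n a_j x^j with real coefficients satisfying a_0 ≥ L·Σ_{j=1}^n |a_j|, such that (x−1)^k divides P(x) for some integer k ≥ (1/5)·√((n−1)(1−L)). -/

import Mathlib

open Polynomial Finset

namespace Stmt11Aux

/-- partial sums of 1/u^2 -/
lemma sum_inv_sq (K : ℕ) : ∑ u ∈ Ioc 0 K, (1:ℝ)/(u:ℝ)^2 ≤ 2 - 2/((K:ℝ)+1) := by
  induction K with
  | zero => simp
  | succ K ih =>
    rw [Finset.sum_Ioc_succ_top (Nat.zero_le _)]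
    have h1 : (0:ℝ) < (K:ℝ) + 1 := by positivity
    have h2 : (0:ℝ) < (K:ℝ) + 2 := by positivity
    have key : (1:ℝ)/((K:ℝ)+1)^2 ≤ 2/((K:ℝ)+1) - 2/((K:ℝ)+2) := by
      rw [div_sub_div _ _ (ne_of_gt h1) (ne_of_gt h2),
        div_le_div_iff₀ (by positivity) (by positivity)]
      nlinarith [sq_nonneg ((K:ℝ)+1)]
    push_cast
    push_cast at ih
    have e : ((K:ℝ) + 1 + 1) = (K:ℝ) + 2 := by ring
    rw [e]
    linarith [ih, key]

/-- product of (1+a) bound -/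
lemma prod_one_add_le {s : Finset ℕ} {a : ℕ → ℝ} (h0 : ∀ u ∈ s, 0 ≤ a u)
    (h1 : ∑ u ∈ s, a u < 1) :
    ∏ u ∈ s, (1 + a u) ≤ 1/(1 - ∑ u ∈ s, a u) := by
  induction s using Finset.induction with
  | empty => simp
  | @insert x s hxs ih =>
    rw [Finset.prod_insert hxs, Finset.sum_insert hxs]
    rw [Finset.sum_insert hxs] at h1
    have hax : 0 ≤ a x := h0 x (mem_insert_self _ _)
    have hs0 : ∀ u ∈ s, 0 ≤ a u := fun u hu => h0 u (mem_insert_of_mem hu)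
    have hSnn : 0 ≤ ∑ u ∈ s, a u := Finset.sum_nonneg hs0
    have hS1 : ∑ u ∈ s, a u < 1 := by linarith
    have hih := ih hs0 hS1
    have hpos1 : (0:ℝ) < 1 - ∑ u ∈ s, a u := by linarith
    have hpos2 : (0:ℝ) < 1 - (a x + ∑ u ∈ s, a u) := by linarith
    calc (1 + a x) * ∏ u ∈ s, (1 + a u) ≤ (1 + a x) * (1/(1 - ∑ u ∈ s, a u)) := by
          apply mul_le_mul_of_nonneg_left hih (by linarith)
      _ ≤ 1/(1 - (a x + ∑ u ∈ s, a u)) := by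
          rw [mul_one_div, div_le_div_iff₀ hpos1 hpos2, one_mul]
          nlinarith [mul_nonneg hax hSnn]


lemma prod_Ioc_id_eq_factorial (n : ℕ) : ∏ x ∈ Ioc 0 n, x = (Nat.factorial n) := by
  rw [← Finset.Icc_add_one_left_eq_Ioc, ← Finset.Ico_add_one_right_eq_Icc]
  exact Finset.prod_Ico_id_eq_factorial n

section ProdBounds

variable {K i : ℕ}

/-- distance function -/
def dd (i u : ℕ) : ℕ := if u < i then i^2 - u^2 else u^2 - i^2

lemma p1 (hi : 1 ≤ i) : ∏ u ∈ Ioc 0 (i-1), (i - u) = ∏ u ∈ Ioc 0 (i-1), u := by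
  apply Finset.prod_nbij' (fun u => i - u) (fun u => i - u)
  all_goals intro a ha
  all_goals simp only [mem_Ioc] at *
  all_goals omega

lemma p2 (hi : 1 ≤ i) : (∏ u ∈ Ioc 0 (i-1), (i + u)) * (Nat.factorial i) = (Nat.factorial (2*i-1)) := by
  have h1 : ∏ u ∈ Ioc 0 (i-1), (i + u) = ∏ u ∈ Ioc i (2*i-1), u := by
    apply Finset.prod_nbij' (fun u => i + u) (fun u => u - i)
    all_goals intro a ha
    all_goals simp only [mem_Ioc] at *
    all_goals omega
  rw [h1, ← prod_Ioc_id_eq_factorial i, ← prod_Ioc_id_eq_factorial (2*i-1), mul_comm]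
  exact Finset.prod_Ioc_consecutive _ (Nat.zero_le i) (by omega)

lemma p3 (hiK : i ≤ K) : ∏ u ∈ Ioc i K, (u - i) = (Nat.factorial (K-i)) := by
  rw [← prod_Ioc_id_eq_factorial (K-i)]
  apply Finset.prod_nbij' (fun u => u - i) (fun u => u + i)
  all_goals intro a ha
  all_goals simp only [mem_Ioc] at *
  all_goals omega

lemma p4 (hiK : i ≤ K) : (∏ u ∈ Ioc i K, (u + i)) * (Nat.factorial (2*i)) = (Nat.factorial (K+i)) := by
  have h1 : ∏ u ∈ Ioc i K, (u + i) = ∏ u ∈ Ioc (2*i) (K+i), u := by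
    apply Finset.prod_nbij' (fun u => u + i) (fun u => u - i)
    all_goals intro a ha
    all_goals simp only [mem_Ioc] at *
    all_goals omega
  rw [h1, ← prod_Ioc_id_eq_factorial (2*i), ← prod_Ioc_id_eq_factorial (K+i), mul_comm]
  exact Finset.prod_Ioc_consecutive _ (Nat.zero_le _) (by omega)

lemma T_split (hi : 1 ≤ i) (hiK : i ≤ K) :
    (Ioc 0 K).erase i = Ioc 0 (i-1) ∪ Ioc i K ∧ Disjoint (Ioc 0 (i-1)) (Ioc i K) := by
  constructor
  · ext a
    simp only [mem_erase, mem_Ioc, mem_union]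
    omega
  · rw [Finset.disjoint_left]
    intro a ha hb
    simp only [mem_Ioc] at *
    omega

/-- key factorial inequality -/
lemma e3 (hiK : i ≤ K) : ((Nat.factorial K))^2 ≤ (Nat.factorial (K-i)) * (Nat.factorial (K+i)) := by
  have h1 : K.choose i * (Nat.factorial i) * (Nat.factorial (K-i)) = (Nat.factorial K) := Nat.choose_mul_factorial_mul_factorial hiK
  have h2 : (K+i).choose i * (Nat.factorial i) * (Nat.factorial (K+i-i)) = (Nat.factorial (K+i)) :=
    Nat.choose_mul_factorial_mul_factorial (by omega)
  rw [show K + i - i = K by omega] at h2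
  have h3 : K.choose i ≤ (K+i).choose i := Nat.choose_le_choose i (by omega)
  calc ((Nat.factorial K))^2 = (K.choose i * (Nat.factorial i) * (Nat.factorial (K-i))) * (Nat.factorial K) := by rw [h1]; ring
    _ ≤ ((K+i).choose i * (Nat.factorial i) * (Nat.factorial (K-i))) * (Nat.factorial K) := by
        apply Nat.mul_le_mul_right
        exact Nat.mul_le_mul_right _ (Nat.mul_le_mul_right _ h3)
    _ = (Nat.factorial (K-i)) * ((K+i).choose i * (Nat.factorial i) * (Nat.factorial K)) := by ring
    _ = (Nat.factorial (K-i)) * (Nat.factorial (K+i)) := by rw [h2]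

/-- the main ℕ product inequality -/
lemma P2nat (hi : 1 ≤ i) (hiK : i ≤ K) :
    ∏ u ∈ (Ioc 0 K).erase i, u^2 ≤ 2 * ∏ u ∈ (Ioc 0 K).erase i, dd i u := by
  obtain ⟨hT, hdisj⟩ := T_split hi hiK
  -- e1 : (∏ u ∈ T, u) * i = (Nat.factorial K)
  have e1 : (∏ u ∈ (Ioc 0 K).erase i, u) * i = (Nat.factorial K) := by
    rw [← prod_Ioc_id_eq_factorial K]
    exact Finset.prod_erase_mul _ _ (by simp [mem_Ioc]; omega)
  -- split dd product
  have hddA : ∀ u ∈ Ioc 0 (i-1), dd i u = (i - u) * (i + u) := by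
    intro u hu
    simp only [mem_Ioc] at hu
    have hu2 : u < i := by omega
    simp only [dd, if_pos hu2]
    have : u^2 ≤ i^2 := Nat.pow_le_pow_left (by omega) 2
    zify [this, hu2.le]
    ring
  have hddB : ∀ u ∈ Ioc i K, dd i u = (u - i) * (u + i) := by
    intro u hu
    simp only [mem_Ioc] at hu
    have hu2 : ¬ (u < i) := by omega
    simp only [dd, if_neg hu2]
    have : i^2 ≤ u^2 := Nat.pow_le_pow_left (by omega) 2
    zify [this, (by omega : i ≤ u)]
    ring
  have e2 : (∏ u ∈ (Ioc 0 K).erase i, dd i u) * ((Nat.factorial i) * (Nat.factorial (2*i))) =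
      (Nat.factorial (i-1)) * (Nat.factorial (2*i-1)) * ((Nat.factorial (K-i)) * (Nat.factorial (K+i))) := by
    rw [hT, Finset.prod_union hdisj, Finset.prod_congr rfl hddA, Finset.prod_congr rfl hddB,
      Finset.prod_mul_distrib, Finset.prod_mul_distrib, p1 hi, prod_Ioc_id_eq_factorial, p3 hiK]
    have h2 := p2 hi
    have h4 := p4 hiK
    calc ((i-1).factorial * ∏ x ∈ Ioc 0 (i - 1), (i + x)) *
          ((K-i).factorial * ∏ x ∈ Ioc i K, (x + i)) *
          (i.factorial * (2 * i).factorial)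
        = ((i-1).factorial * (K-i).factorial) *
          (((∏ x ∈ Ioc 0 (i - 1), (i + x)) * i.factorial) *
           ((∏ x ∈ Ioc i K, (x + i)) * (2*i).factorial)) := by ring
      _ = (i-1).factorial * (2*i-1).factorial * ((K-i).factorial * (K+i).factorial) := by
          rw [h2, h4]; ring
  -- now combine
  obtain ⟨j, rfl⟩ : ∃ j, i = j + 1 := ⟨i - 1, by omega⟩
  have hfac1 : (j+1).factorial = (j+1) * j.factorial := Nat.factorial_succ j
  have hfac2 : (2*(j+1)).factorial = (2*(j+1)) * (2*(j+1)-1).factorial := by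
    rw [show 2*(j+1)-1 = 2*j+1 by omega, show 2*(j+1) = (2*j+1)+1 by ring]
    exact Nat.factorial_succ _
  have hA : ∏ u ∈ (Ioc 0 K).erase (j+1), u^2 = (∏ u ∈ (Ioc 0 K).erase (j+1), u)^2 := by
    rw [← Finset.prod_pow]
  set A := ∏ u ∈ (Ioc 0 K).erase (j+1), u with hAdef
  set D := ∏ u ∈ (Ioc 0 K).erase (j+1), dd (j+1) u with hDdef
  rw [hA]
  have hMpos : 0 < (j+1)^2 * ((j+1).factorial * (2*(j+1)).factorial) := by positivity
  apply Nat.le_of_mul_le_mul_right _ hMpos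
  have lhs_eq : A^2 * ((j+1)^2 * ((j+1).factorial * (2*(j+1)).factorial))
      = (K.factorial)^2 * ((j+1).factorial * (2*(j+1)).factorial) := by
    rw [← e1]; ring
  have rhs_eq : (2 * D) * ((j+1)^2 * ((j+1).factorial * (2*(j+1)).factorial))
      = ((j+1).factorial * (2*(j+1)).factorial) * ((K-(j+1)).factorial * (K+(j+1)).factorial) := by
    calc (2 * D) * ((j+1)^2 * ((j+1).factorial * (2*(j+1)).factorial))
        = 2 * (j+1)^2 * (D * ((j+1).factorial * (2*(j+1)).factorial)) := by ring
      _ = 2 * (j+1)^2 * ((j+1-1).factorial * (2*(j+1)-1).factorial *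
            ((K-(j+1)).factorial * (K+(j+1)).factorial)) := by rw [e2]
      _ = ((j+1) * (j+1-1).factorial) * ((2*(j+1)) * (2*(j+1)-1).factorial) *
            ((K-(j+1)).factorial * (K+(j+1)).factorial) := by
          rw [show j+1-1 = j by omega]; ring
      _ = ((j+1).factorial * (2*(j+1)).factorial) * ((K-(j+1)).factorial * (K+(j+1)).factorial) := by
          rw [show j+1-1 = j by omega] at *
          rw [← hfac1, ← hfac2]
  rw [lhs_eq, rhs_eq]
  calc (K.factorial)^2 * ((j+1).factorial * (2*(j+1)).factorial)
      = ((j+1).factorial * (2*(j+1)).factorial) * (K.factorial)^2 := by ring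
    _ ≤ ((j+1).factorial * (2*(j+1)).factorial) * ((K-(j+1)).factorial * (K+(j+1)).factorial) :=
        Nat.mul_le_mul_left _ (e3 hiK)

end ProdBounds


def nodes (β u : ℕ) : ℕ := 1 + β * u^2

noncomputable def lam (β k i : ℕ) : ℝ :=
  ∏ u ∈ (Finset.range k).erase i, (nodes β u : ℝ) / ((nodes β u : ℝ) - (nodes β i : ℝ))

lemma nodes_injOn (β : ℕ) (hβ : 0 < β) :
    Set.InjOn (fun u : ℕ => (nodes β u : ℝ)) ↑(Finset.range k) := by
  intro a _ b _ h
  simp only [Nat.cast_inj] at h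
  have : a^2 = b^2 := by
    simp only [nodes] at h
    exact Nat.eq_of_mul_eq_mul_left hβ (by omega)
  exact Nat.pow_left_injective (by norm_num) this

lemma basis_eval_zero (β k i : ℕ) (hβ : 0 < β) (hik : i ∈ Finset.range k) :
    (Lagrange.basis (Finset.range k) (fun u : ℕ => (nodes β u : ℝ)) i).eval 0 = lam β k i := by
  rw [Lagrange.basis, eval_prod, lam]
  apply Finset.prod_congr rfl
  intro u hu
  have hui : u ≠ i := (Finset.mem_erase.mp hu).1
  have hu' : u ∈ Finset.range k := Finset.mem_of_mem_erase hu
  have hne' : (nodes β u : ℝ) - (nodes β i : ℝ) ≠ 0 := by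
    rw [sub_ne_zero]
    intro h
    exact hui (nodes_injOn β hβ (Finset.mem_coe.mpr hu') (Finset.mem_coe.mpr hik) h)
  have hne : (nodes β i : ℝ) - (nodes β u : ℝ) ≠ 0 := fun h => hne' (by linarith [sub_eq_zero.mp h])
  simp only [Lagrange.basisDivisor, eval_mul, eval_C, eval_sub, eval_X]
  rw [eq_div_iff hne']
  field_simp
  ring

lemma interp (β k : ℕ) (hβ : 0 < β) (f : ℝ[X]) (hf : f.degree < k) :
    f.eval 0 = ∑ i ∈ Finset.range k, lam β k i * f.eval ((nodes β i : ℝ)) := by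
  have hvs : Set.InjOn (fun u : ℕ => (nodes β u : ℝ)) ↑(Finset.range k) := nodes_injOn β hβ
  have heq := Lagrange.eq_interpolate hvs (by rwa [Finset.card_range] : f.degree < #(Finset.range k))
  conv_lhs => rw [heq]
  rw [Lagrange.interpolate_apply, eval_finset_sum]
  apply Finset.sum_congr rfl
  intro i hi
  rw [eval_mul, eval_C, basis_eval_zero β k i hβ hi]
  ring


lemma dd_pos {i u K : ℕ} (hu : u ∈ (Ioc 0 K).erase i) : 0 < dd i u := by
  have h1 : u ≠ i := (Finset.mem_erase.mp hu).1
  have h2 : u ∈ Ioc 0 K := Finset.mem_of_mem_erase hu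
  simp only [mem_Ioc] at h2
  unfold dd
  split
  · rename_i h
    have : u^2 < i^2 := Nat.pow_lt_pow_left h (by norm_num)
    omega
  · rename_i h
    have hlt : i < u := by omega
    have : i^2 < u^2 := Nat.pow_lt_pow_left hlt (by norm_num)
    omega

lemma dd_cast {i u : ℕ} (hui : u ≠ i) : ((dd i u : ℕ) : ℝ) = |(u:ℝ)^2 - (i:ℝ)^2| := by
  unfold dd
  split
  · rename_i h
    have h2 : u^2 ≤ i^2 := le_of_lt (Nat.pow_lt_pow_left h (by norm_num))
    rw [Nat.cast_sub h2, abs_sub_comm, abs_of_nonneg]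
    · push_cast; ring
    · push_cast
      have : (u:ℝ) ≤ (i:ℝ) := by exact_mod_cast h.le
      nlinarith [Nat.cast_nonneg (α := ℝ) u]
  · rename_i h
    have hlt : i ≤ u := by omega
    have h2 : i^2 ≤ u^2 := Nat.pow_le_pow_left hlt 2
    rw [Nat.cast_sub h2, abs_of_nonneg]
    · push_cast; ring
    · push_cast
      have : (i:ℝ) ≤ (u:ℝ) := by exact_mod_cast hlt
      nlinarith [Nat.cast_nonneg (α := ℝ) i]

lemma lam_abs_le (β K : ℕ) (hβ : 24 ≤ β) (i : ℕ) (hi : 1 ≤ i) (hiK : i ≤ K) :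
    |lam β (K+1) i| ≤ 4 / ((β:ℝ) * (i:ℝ)^2) := by
  have hβpos : (0:ℝ) < (β:ℝ) := by exact_mod_cast (by omega : 0 < β)
  have hipos : (0:ℝ) < (i:ℝ) := by exact_mod_cast hi
  set T := (Ioc 0 K).erase i with hT
  have hsplit : (Finset.range (K+1)).erase i = insert 0 T := by
    ext a
    simp only [hT, Finset.mem_erase, Finset.mem_range, Finset.mem_insert, mem_Ioc]
    omega
  have h0T : 0 ∉ T := by simp [hT, mem_Ioc]
  -- the absolute value of each factor
  have hfac : ∀ u, u ≠ i → |(nodes β u : ℝ) / ((nodes β u : ℝ) - (nodes β i : ℝ))|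
      = (nodes β u : ℝ) / ((β:ℝ) * |(u:ℝ)^2 - (i:ℝ)^2|) := by
    intro u hui
    rw [abs_div, abs_of_nonneg (Nat.cast_nonneg _)]
    congr 1
    have : (nodes β u : ℝ) - (nodes β i : ℝ) = (β:ℝ) * ((u:ℝ)^2 - (i:ℝ)^2) := by
      simp only [nodes]; push_cast; ring
    rw [this, abs_mul, abs_of_nonneg hβpos.le]
  rw [lam, Finset.abs_prod, hsplit, Finset.prod_insert h0T]
  have hzero : |(nodes β 0 : ℝ) / ((nodes β 0 : ℝ) - (nodes β i : ℝ))|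
      = 1 / ((β:ℝ) * (i:ℝ)^2) := by
    rw [hfac 0 (by omega)]
    have habs : |((0:ℕ):ℝ)^2 - (i:ℝ)^2| = (i:ℝ)^2 := by
      rw [abs_sub_comm]
      norm_num
    rw [habs]
    simp only [nodes]
    push_cast
    norm_num
  rw [hzero]
  -- bound the T-product by 4
  have hprodT : ∏ u ∈ T, |(nodes β u : ℝ) / ((nodes β u : ℝ) - (nodes β i : ℝ))| ≤ 4 := by
    have hfacT : ∀ u ∈ T, |(nodes β u : ℝ) / ((nodes β u : ℝ) - (nodes β i : ℝ))|
        = ((u:ℝ)^2 + (β:ℝ)⁻¹) / ((dd i u : ℕ) : ℝ) := by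
      intro u hu
      have hui : u ≠ i := (Finset.mem_erase.mp hu).1
      rw [hfac u hui, ← dd_cast hui]
      have hnum : (nodes β u : ℝ) = (β:ℝ) * ((u:ℝ)^2 + (β:ℝ)⁻¹) := by
        simp only [nodes]; push_cast; field_simp; ring
      rw [hnum, mul_div_mul_left _ _ (ne_of_gt hβpos)]
    rw [Finset.prod_congr rfl hfacT, Finset.prod_div_distrib]
    have hddpos : (0:ℝ) < ∏ u ∈ T, ((dd i u : ℕ) : ℝ) := by
      apply Finset.prod_pos
      intro u hu
      exact_mod_cast dd_pos hu
    rw [div_le_iff₀ hddpos]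
    -- numerator ≤ 2 * ∏ u^2
    have hupos : ∀ u ∈ T, (0:ℝ) < (u:ℝ)^2 := by
      intro u hu
      have : u ∈ Ioc 0 K := Finset.mem_of_mem_erase hu
      simp only [mem_Ioc] at this
      have : (0:ℝ) < (u:ℝ) := by exact_mod_cast this.1
      positivity
    have hsum : ∑ u ∈ T, (β:ℝ)⁻¹ / (u:ℝ)^2 ≤ 1/12 := by
      have h1 : ∑ u ∈ T, (β:ℝ)⁻¹ / (u:ℝ)^2 ≤ ∑ u ∈ Ioc 0 K, (β:ℝ)⁻¹ / (u:ℝ)^2 := by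
        apply Finset.sum_le_sum_of_subset_of_nonneg (Finset.erase_subset _ _)
        intro u _ _
        positivity
      have h2 : ∑ u ∈ Ioc 0 K, (β:ℝ)⁻¹ / (u:ℝ)^2 = (β:ℝ)⁻¹ * ∑ u ∈ Ioc 0 K, 1/(u:ℝ)^2 := by
        rw [Finset.mul_sum]
        apply Finset.sum_congr rfl
        intro u _
        ring
      have h3 := sum_inv_sq K
      have h24 : (24:ℝ) ≤ (β:ℝ) := by exact_mod_cast hβ
      have h4 : (β:ℝ)⁻¹ ≤ 1/24 := by
        rw [inv_eq_one_div]
        exact one_div_le_one_div_of_le (by norm_num) h24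
      have h5 : (0:ℝ) ≤ ∑ u ∈ Ioc 0 K, 1/(u:ℝ)^2 := by
        apply Finset.sum_nonneg; intro u _; positivity
      have h6 : ∑ u ∈ Ioc 0 K, 1/(u:ℝ)^2 ≤ 2 := by
        have := sum_inv_sq K
        have : (0:ℝ) < 2/((K:ℝ)+1) := by positivity
        linarith [sum_inv_sq K]
      calc ∑ u ∈ T, (β:ℝ)⁻¹ / (u:ℝ)^2 ≤ (β:ℝ)⁻¹ * ∑ u ∈ Ioc 0 K, 1/(u:ℝ)^2 := by
            rw [← h2]; exact h1
        _ ≤ (1/24) * 2 := by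
            apply mul_le_mul h4 h6 h5 (by norm_num)
        _ ≤ 1/12 := by norm_num
    have hprod_eps : ∏ u ∈ T, ((u:ℝ)^2 + (β:ℝ)⁻¹) ≤ 2 * ∏ u ∈ T, (u:ℝ)^2 := by
      have hrw : ∀ u ∈ T, (u:ℝ)^2 + (β:ℝ)⁻¹ = (u:ℝ)^2 * (1 + (β:ℝ)⁻¹/(u:ℝ)^2) := by
        intro u hu
        field_simp [ne_of_gt (hupos u hu)]
        rw [mul_add, mul_one_div_cancel (ne_of_gt (hupos u hu))]
      rw [Finset.prod_congr rfl hrw, Finset.prod_mul_distrib]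
      have h7 : ∏ u ∈ T, (1 + (β:ℝ)⁻¹/(u:ℝ)^2) ≤ 2 := by
        have h8 := prod_one_add_le (s := T) (a := fun u => (β:ℝ)⁻¹/(u:ℝ)^2)
          (fun u hu => by positivity) (by linarith [hsum])
        have h9 : 1/(1 - ∑ u ∈ T, (β:ℝ)⁻¹/(u:ℝ)^2) ≤ 2 := by
          rw [div_le_iff₀ (by linarith [hsum])]
          have h10 : (0:ℝ) ≤ ∑ u ∈ T, (β:ℝ)⁻¹/(u:ℝ)^2 := by
            apply Finset.sum_nonneg; intro u _; positivity
          linarith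
        exact le_trans h8 h9
      calc (∏ u ∈ T, (u:ℝ)^2) * ∏ u ∈ T, (1 + (β:ℝ)⁻¹/(u:ℝ)^2)
          ≤ (∏ u ∈ T, (u:ℝ)^2) * 2 := by
            apply mul_le_mul_of_nonneg_left h7
            exact Finset.prod_nonneg (fun u hu => (hupos u hu).le)
        _ = 2 * ∏ u ∈ T, (u:ℝ)^2 := by ring
    have hP2 : ∏ u ∈ T, (u:ℝ)^2 ≤ 2 * ∏ u ∈ T, ((dd i u : ℕ) : ℝ) := by
      have := P2nat hi hiK
      calc ∏ u ∈ T, (u:ℝ)^2 = ((∏ u ∈ T, u^2 : ℕ) : ℝ) := by push_cast; rfl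
        _ ≤ ((2 * ∏ u ∈ T, dd i u : ℕ) : ℝ) := by exact_mod_cast this
        _ = 2 * ∏ u ∈ T, ((dd i u : ℕ) : ℝ) := by push_cast; rfl
    calc ∏ u ∈ T, ((u:ℝ)^2 + (β:ℝ)⁻¹) ≤ 2 * ∏ u ∈ T, (u:ℝ)^2 := hprod_eps
      _ ≤ 2 * (2 * ∏ u ∈ T, ((dd i u : ℕ) : ℝ)) := by linarith [hP2]
      _ = 4 * ∏ u ∈ T, ((dd i u : ℕ) : ℝ) := by ring
  calc 1/((β:ℝ)*(i:ℝ)^2) * ∏ u ∈ T, |(nodes β u : ℝ) / ((nodes β u : ℝ) - (nodes β i : ℝ))|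
      ≤ 1/((β:ℝ)*(i:ℝ)^2) * 4 := by
        apply mul_le_mul_of_nonneg_left hprodT (by positivity)
    _ = 4 / ((β:ℝ) * (i:ℝ)^2) := by ring


noncomputable def PP (β k : ℕ) : ℝ[X] :=
  1 - ∑ i ∈ Finset.range k, C (lam β k i) * X ^ (nodes β i)

lemma sum_comp' {ι : Type*} (s : Finset ι) (f : ι → ℝ[X]) (q : ℝ[X]) :
    (∑ i ∈ s, f i).comp q = ∑ i ∈ s, (f i).comp q := by
  simp only [Polynomial.comp, Polynomial.eval₂_finset_sum]

lemma PP_coeff (β k j : ℕ) : (PP β k).coeff j =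
    (if j = 0 then 1 else 0)
      - ∑ i ∈ Finset.range k, lam β k i * (if j = nodes β i then 1 else 0) := by
  simp only [PP, coeff_sub, coeff_one, finset_sum_coeff, coeff_C_mul, coeff_X_pow]

lemma PP_comp_coeff (β k r : ℕ) : ((PP β k).comp (X + 1)).coeff r =
    (if r = 0 then 1 else 0) - ∑ i ∈ Finset.range k, lam β k i * ((nodes β i).choose r : ℝ) := by
  rw [PP, sub_comp, one_comp, sum_comp']
  rw [coeff_sub, coeff_one, finset_sum_coeff]
  congr 1
  apply Finset.sum_congr rfl
  intro i _
  rw [mul_comp, C_comp, pow_comp, X_comp, coeff_C_mul, coeff_X_add_one_pow]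

lemma sum_lam (β k : ℕ) (hβ : 0 < β) (hk : 0 < k) : ∑ i ∈ Finset.range k, lam β k i = 1 := by
  have h := interp β k hβ 1 (by rw [degree_one]; exact_mod_cast hk)
  simp only [eval_one, mul_one] at h
  exact h.symm

lemma sum_lam_desc (β k : ℕ) (hβ : 0 < β) {r : ℕ} (hr : 0 < r) (hrk : r < k) :
    ∑ i ∈ Finset.range k, lam β k i * ((nodes β i).descFactorial r : ℝ) = 0 := by
  have hdeg : (descPochhammer ℝ r).degree < (k : ℕ) := by
    apply lt_of_le_of_lt (degree_le_natDegree)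
    rw [descPochhammer_natDegree]
    exact_mod_cast hrk
  have h := interp β k hβ (descPochhammer ℝ r) hdeg
  rw [descPochhammer_eval_zero, if_neg (by omega)] at h
  have heq : ∀ i ∈ Finset.range k, lam β k i * ((nodes β i).descFactorial r : ℝ)
      = lam β k i * (descPochhammer ℝ r).eval ((nodes β i : ℕ) : ℝ) := by
    intro i _
    rw [descPochhammer_eval_eq_descFactorial]
  rw [Finset.sum_congr rfl heq, ← h]

lemma dvd_PP (β k : ℕ) (hβ : 0 < β) (hk : 0 < k) : (X - 1 : ℝ[X])^k ∣ PP β k := by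
  have hcoeffs : ∀ r < k, ((PP β k).comp (X + 1)).coeff r = 0 := by
    intro r hr
    rw [PP_comp_coeff]
    rcases Nat.eq_zero_or_pos r with h0 | hpos
    · subst h0
      simp only [if_pos rfl, Nat.choose_zero_right, Nat.cast_one, mul_one]
      rw [sum_lam β k hβ hk]
      simp
    · rw [if_neg (by omega)]
      have hchoose : ∑ i ∈ Finset.range k, lam β k i * ((nodes β i).choose r : ℝ) = 0 := by
        have hd := sum_lam_desc β k hβ hpos hr
        have heq : ∀ i ∈ Finset.range k,
            lam β k i * ((nodes β i).descFactorial r : ℝ)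
              = (r.factorial : ℝ) * (lam β k i * ((nodes β i).choose r : ℝ)) := by
          intro i _
          rw [Nat.descFactorial_eq_factorial_mul_choose]
          push_cast
          ring
        rw [Finset.sum_congr rfl heq, ← Finset.mul_sum] at hd
        have hfac : (r.factorial : ℝ) ≠ 0 := by
          exact_mod_cast Nat.factorial_ne_zero r
        exact (mul_eq_zero.mp hd).resolve_left hfac
      rw [hchoose]
      ring
  obtain ⟨R, hR⟩ := (Polynomial.X_pow_dvd_iff).mpr hcoeffs
  refine ⟨R.comp (X - 1), ?_⟩
  have h2 : PP β k = ((PP β k).comp (X + 1)).comp (X - 1) := by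
    rw [Polynomial.comp_assoc]
    simp [add_comp, X_comp, one_comp]
  rw [h2, hR, mul_comp, pow_comp, X_comp]

end Stmt11Aux

open Stmt11Aux

set_option maxHeartbeats 2000000 in
theorem stmt11 (L : ℝ) (hL0 : 0 < L) (hL : L < 1) (n : ℕ) :
    ∃ P : Polynomial ℝ, P ≠ 0 ∧ P.natDegree ≤ n ∧
      P.coeff 0 ≥ L * ∑ j ∈ Finset.Icc 1 n, |P.coeff j| ∧
      ∃ k : ℕ, (k : ℝ) ≥ (1/5) * Real.sqrt (((n : ℝ) - 1) * (1 - L)) ∧ (X - 1) ^ k ∣ P := by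
  set b : ℝ := (1/5) * Real.sqrt (((n : ℝ) - 1) * (1 - L)) with hbdef
  rcases le_or_gt (n : ℕ) 1 with hn1 | hn2
  · -- trivial case : P = 1, k = 0
    refine ⟨1, one_ne_zero, by simp, ?_, 0, ?_, by simp⟩
    · have hz : ∑ j ∈ Finset.Icc 1 n, |(1 : ℝ[X]).coeff j| = 0 := by
        apply Finset.sum_eq_zero
        intro j hj
        simp only [Finset.mem_Icc] at hj
        rw [coeff_one, if_neg (by omega)]
        simp
      rw [hz, mul_zero, coeff_one, if_pos rfl]
      norm_num
    · have hsq : Real.sqrt (((n : ℝ) - 1) * (1 - L)) = 0 := by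
        apply Real.sqrt_eq_zero'.mpr
        have h1 : (n : ℝ) ≤ 1 := by exact_mod_cast hn1
        nlinarith
      rw [hbdef] at *
      rw [hsq]
      norm_num
  rcases le_or_gt b 1 with hb1 | hb2
  · -- case k = 1 : P = 1 - X
    refine ⟨1 - X, ?_, ?_, ?_, 1, ?_, ?_⟩
    · intro h
      have : (1 - X : ℝ[X]).coeff 1 = 0 := by rw [h]; simp
      rw [coeff_sub, coeff_one, coeff_X_one] at this
      norm_num at this
    · apply le_trans (natDegree_sub_le _ _)
      simp only [natDegree_one, natDegree_X]
      omega
    · have hco : ∀ j ∈ Finset.Icc 1 n, |(1 - X : ℝ[X]).coeff j| = if j = 1 then 1 else 0 := by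
        intro j hj
        simp only [Finset.mem_Icc] at hj
        rw [coeff_sub, coeff_one, coeff_X, if_neg (by omega)]
        rcases eq_or_ne j 1 with h1 | h1
        · subst h1; norm_num
        · rw [if_neg (by omega), if_neg h1]
          norm_num
      rw [Finset.sum_congr rfl hco, Finset.sum_ite_eq' (Finset.Icc 1 n) 1 (fun _ => (1:ℝ))]
      rw [if_pos (by simp [Finset.mem_Icc]; omega)]
      rw [coeff_sub, coeff_one, coeff_X_zero]
      norm_num
      linarith
    · exact_mod_cast hb1
    · rw [pow_one]
      exact ⟨-1, by ring⟩
  · -- main case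
    have hn1R : (1:ℝ) ≤ (n:ℝ) - 1 := by
      have h2 : (2:ℝ) ≤ (n:ℝ) := by exact_mod_cast hn2
      linarith

    have hnn : (0:ℝ) ≤ ((n:ℝ)-1)*(1-L) := by nlinarith
    have hL1 : (0:ℝ) < 1 - L := by linarith
    have hbsq : b^2 = ((n:ℝ)-1)*(1-L)/25 := by
      rw [hbdef, mul_pow, Real.sq_sqrt hnn]
      ring
    set k := ⌈b⌉₊ with hkdef
    have hk2 : 2 ≤ k := by
      have h1 : 1 < ⌈b⌉₊ := Nat.lt_ceil.mpr (by exact_mod_cast hb2)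
      omega
    set K := k - 1 with hKdef
    have hkK : k = K + 1 := by omega
    have hK1 : 1 ≤ K := by omega
    have hKb : (K:ℝ) < b := Nat.lt_ceil.mp (by omega)
    have hK0 : (0:ℝ) ≤ (K:ℝ) := Nat.cast_nonneg K
    have hb0 : (0:ℝ) < b := by linarith
    have hKsq : (K:ℝ)^2 < ((n:ℝ)-1)*(1-L)/25 := by
      rw [← hbsq]
      nlinarith
    set β := (n-1) / (K^2) with hβdef
    have hK2pos : 0 < K^2 := by positivity
    have hβK : β * K^2 ≤ n - 1 := Nat.div_mul_le_self _ _
    have hlt : n - 1 < (β+1) * K^2 := by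
      have h1 : (n-1)/K^2 < β + 1 := Nat.lt_succ_self _
      exact (Nat.div_lt_iff_lt_mul hK2pos).mp h1
    have hcastn : ((n-1:ℕ):ℝ) = (n:ℝ) - 1 := by
      have h1 : 1 ≤ n := by omega
      push_cast [h1]
      ring
    have hβreal : 24/(1-L) ≤ (β:ℝ) := by
      have h1 : (n:ℝ) - 1 < ((β:ℝ)+1) * (K:ℝ)^2 := by
        have h2 : ((n-1:ℕ):ℝ) < (((β+1) * K^2 : ℕ):ℝ) := by exact_mod_cast hlt
        rw [hcastn] at h2
        push_cast at h2
        linarith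
      have hβ1 : (0:ℝ) ≤ (β:ℝ)+1 := by positivity
      have h3 : (n:ℝ)-1 < ((β:ℝ)+1) * (((n:ℝ)-1)*(1-L)/25) := by
        calc (n:ℝ)-1 < ((β:ℝ)+1) * (K:ℝ)^2 := h1
          _ ≤ ((β:ℝ)+1) * (((n:ℝ)-1)*(1-L)/25) := by
              apply mul_le_mul_of_nonneg_left (le_of_lt hKsq) hβ1
      have h4 : 25 < ((β:ℝ)+1) * (1-L) := by nlinarith
      rw [div_le_iff₀ hL1]
      nlinarith
    have hβ24 : 24 ≤ β := by
      have h24 : (24:ℝ) ≤ 24/(1-L) := by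
        rw [le_div_iff₀ hL1]
        nlinarith
      have : (24:ℝ) ≤ (β:ℝ) := le_trans h24 hβreal
      exact_mod_cast this
    have hβpos : 0 < β := by omega
    have hβRpos : (0:ℝ) < (β:ℝ) := by exact_mod_cast hβpos
    have hnodes : ∀ i ∈ Finset.range k, nodes β i ∈ Finset.Icc 1 n := by
      intro i hi
      simp only [Finset.mem_range, hkK] at hi
      simp only [nodes, Finset.mem_Icc]
      constructor
      · omega
      · have h1 : i^2 ≤ K^2 := Nat.pow_le_pow_left (by omega) 2
        have h2 : β * i^2 ≤ β * K^2 := Nat.mul_le_mul_left _ h1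
        omega
    have hc0 : (PP β k).coeff 0 = 1 := by
      rw [PP_coeff, if_pos rfl]
      have hz : ∀ i ∈ Finset.range k, lam β k i * (if 0 = nodes β i then 1 else 0) = 0 := by
        intro i hi
        have := hnodes i hi
        simp only [Finset.mem_Icc] at this
        rw [if_neg (by omega), mul_zero]
      rw [Finset.sum_eq_zero hz]
      ring
    -- the sums
    set S := ∑ i ∈ Finset.Ioc 0 K, |lam β k i| with hSdef
    have hSnonneg : 0 ≤ S := Finset.sum_nonneg (fun i _ => abs_nonneg _)
    have hSle : S ≤ 8/(β:ℝ) := by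
      rw [hSdef]
      have h1 : ∀ i ∈ Finset.Ioc 0 K, |lam β k i| ≤ 4/((β:ℝ)*(i:ℝ)^2) := by
        intro i hi
        simp only [Finset.mem_Ioc] at hi
        rw [hkK]
        exact lam_abs_le β K hβ24 i (by omega) hi.2
      apply le_trans (Finset.sum_le_sum h1)
      have h2 : ∑ i ∈ Finset.Ioc 0 K, 4/((β:ℝ)*(i:ℝ)^2)
          = (4/(β:ℝ)) * ∑ i ∈ Finset.Ioc 0 K, 1/(i:ℝ)^2 := by
        rw [Finset.mul_sum]
        apply Finset.sum_congr rfl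
        intro i _
        rw [div_mul_div_comm, mul_one]
      rw [h2]
      have h3 : ∑ i ∈ Finset.Ioc 0 K, 1/(i:ℝ)^2 ≤ 2 := by
        have h4 := sum_inv_sq K
        have h5 : (0:ℝ) < 2/((K:ℝ)+1) := by positivity
        linarith
      have h6 : (0:ℝ) ≤ 4/(β:ℝ) := by positivity
      calc (4/(β:ℝ)) * ∑ i ∈ Finset.Ioc 0 K, 1/(i:ℝ)^2 ≤ (4/(β:ℝ)) * 2 :=
            mul_le_mul_of_nonneg_left h3 h6
        _ = 8/(β:ℝ) := by ring
    have hrange : Finset.range k = insert 0 (Finset.Ioc 0 K) := by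
      ext a
      simp only [Finset.mem_range, Finset.mem_insert, Finset.mem_Ioc, hkK]
      omega
    have h0notin : (0:ℕ) ∉ Finset.Ioc 0 K := by simp
    have hlam0 : |lam β k 0| ≤ 1 + S := by
      have hsum1 := sum_lam β k hβpos (by omega)
      rw [hrange, Finset.sum_insert h0notin] at hsum1
      have heq : lam β k 0 = 1 - ∑ i ∈ Finset.Ioc 0 K, lam β k i := by linarith
      rw [heq, sub_eq_add_neg]
      apply le_trans (abs_add_le _ _)
      rw [abs_one, abs_neg]
      exact add_le_add_right (Finset.abs_sum_le_sum_abs _ _) 1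
    have htotal : ∑ i ∈ Finset.range k, |lam β k i| ≤ 1 + 2*S := by
      rw [hrange, Finset.sum_insert h0notin]
      linarith
    have hcoeffsum : ∑ j ∈ Finset.Icc 1 n, |(PP β k).coeff j|
        ≤ ∑ i ∈ Finset.range k, |lam β k i| := by
      have h1 : ∀ j ∈ Finset.Icc 1 n, |(PP β k).coeff j|
          ≤ ∑ i ∈ Finset.range k, |lam β k i| * (if j = nodes β i then 1 else 0) := by
        intro j hj
        simp only [Finset.mem_Icc] at hj
        rw [PP_coeff, if_neg (by omega), zero_sub, abs_neg]
        apply le_trans (Finset.abs_sum_le_sum_abs _ _)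
        apply Finset.sum_le_sum
        intro i _
        rw [abs_mul]
        apply mul_le_mul_of_nonneg_left _ (abs_nonneg _)
        split
        · rw [abs_one]
        · rw [abs_zero]
      apply le_trans (Finset.sum_le_sum h1)
      rw [Finset.sum_comm]
      have h2 : ∀ i ∈ Finset.range k,
          ∑ j ∈ Finset.Icc 1 n, |lam β k i| * (if j = nodes β i then 1 else 0)
            = |lam β k i| := by
        intro i hi
        have h3 : ∀ j ∈ Finset.Icc 1 n, |lam β k i| * (if j = nodes β i then 1 else 0)
            = if j = nodes β i then |lam β k i| else 0 := by
          intro j _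
          split <;> ring
        rw [Finset.sum_congr rfl h3, Finset.sum_ite_eq' (Finset.Icc 1 n) (nodes β i)
          (fun _ => |lam β k i|), if_pos (hnodes i hi)]
      rw [Finset.sum_congr rfl h2]
    refine ⟨PP β k, ?_, ?_, ?_, k, ?_, dvd_PP β k hβpos (by omega)⟩
    · intro h
      rw [h, coeff_zero] at hc0
      norm_num at hc0
    · rw [natDegree_le_iff_coeff_eq_zero]
      intro N hN
      rw [PP_coeff, if_neg (by omega)]
      have hz : ∀ i ∈ Finset.range k, lam β k i * (if N = nodes β i then 1 else 0) = 0 := by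
        intro i hi
        have := hnodes i hi
        simp only [Finset.mem_Icc] at this
        rw [if_neg (by omega), mul_zero]
      rw [Finset.sum_eq_zero hz]
      ring
    · rw [hc0]
      have hfinal : L * ∑ j ∈ Finset.Icc 1 n, |(PP β k).coeff j| ≤ 1 := by
        have hSL : S ≤ (1-L)/3 := by
          have h1 : 24 ≤ (β:ℝ)*(1-L) := by
            rw [div_le_iff₀ hL1] at hβreal
            linarith
          rw [le_div_iff₀ (by norm_num : (0:ℝ) < 3)]
          rw [le_div_iff₀ hβRpos] at hSle
          have h2 : (β:ℝ) * (3*S) ≤ (β:ℝ) * (1-L) := by nlinarith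
          have h3 := le_of_mul_le_mul_left h2 hβRpos
          linarith
        have hsum_nonneg : (0:ℝ) ≤ ∑ j ∈ Finset.Icc 1 n, |(PP β k).coeff j| :=
          Finset.sum_nonneg (fun j _ => abs_nonneg _)
        have h2 : ∑ j ∈ Finset.Icc 1 n, |(PP β k).coeff j| ≤ 1 + 2*S :=
          le_trans hcoeffsum htotal
        nlinarith
      linarith
    · exact Nat.le_ceil b
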